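/- For any infinite cardinal κ, the free group F_κ on κ generators can be partitioned into κ pairwise disjoint left 3-large subsets; specifically, for each generator a, the set P_a of all reduced words whose first letter is a or a⁻¹ satisfies F_κ = {e, a}·P_a. -/

import Mathlib

open Pointwise Cardinal

lemma fg_key_toWord {ι : Type*} [DecidableEq ι] (a : ι) (g : FreeGroup ι)
    (h : g.toWord.head? ≠ some (a, true)) :
    ((FreeGroup.of a)⁻¹ * g).toWord = (a, false) :: g.toWord := by
  have h1 : (FreeGroup.of a)⁻¹ * g = FreeGroup.mk ((a, false) :: g.toWord) := by
    conv_lhs => rw [← FreeGroup.mk_toWord (x := g), show (FreeGroup.of a) = FreeGroup.mk [(a, true)] from rfl, FreeGroup.inv_mk, FreeGroup.mul_mk]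
    rfl
  rw [h1, FreeGroup.toWord_mk, FreeGroup.reduce.cons, FreeGroup.reduce_toWord]
  cases hw : g.toWord with
  | nil => rfl
  | cons hd tl =>
    obtain ⟨x, b⟩ := hd
    simp only []
    rw [if_neg]
    rintro ⟨h2, h3⟩
    apply h
    rw [hw]
    cases b
    · simp at h3
    · simp [h2]

lemma fg_key {ι : Type*} [DecidableEq ι] (a : ι) :
    ({1, FreeGroup.of a} : Set (FreeGroup ι)) *
      {g : FreeGroup ι | ∃ b : Bool, (FreeGroup.toWord g).head? = some (a, b)} =
    Set.univ := by
  ext g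
  simp only [Set.mem_univ, iff_true]
  by_cases hg : ∃ b : Bool, g.toWord.head? = some (a, b)
  · exact ⟨1, Set.mem_insert _ _, g, hg, one_mul g⟩
  · refine ⟨FreeGroup.of a, Set.mem_insert_of_mem _ rfl, (FreeGroup.of a)⁻¹ * g,
      ⟨false, ?_⟩, by group⟩
    rw [fg_key_toWord a g (fun h => hg ⟨true, h⟩)]
    rfl

theorem free_group_partition_left_three_large (ι : Type*) [DecidableEq ι] (κ : Cardinal)
    (hκ : κ = #ι) (hinf : Cardinal.aleph0 ≤ κ) :
    (∃ Q : ι → Set (FreeGroup ι),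
      Pairwise (Function.onFun Disjoint Q) ∧
      (⋃ a, Q a) = Set.univ ∧
      ∀ a, ∃ F : Set (FreeGroup ι), #F < 3 ∧ F * Q a = Set.univ) ∧
    (∀ a : ι,
      ({1, FreeGroup.of a} : Set (FreeGroup ι)) *
        {g : FreeGroup ι | ∃ b : Bool, (FreeGroup.toWord g).head? = some (a, b)} =
      Set.univ) := by
  have hne : Nonempty ι := by
    rw [hκ] at hinf
    exact Cardinal.mk_ne_zero_iff.mp (fun h => Cardinal.aleph0_ne_zero (le_antisymm (h ▸ hinf) zero_le))
  obtain ⟨a₀⟩ := hne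
  set P : ι → Set (FreeGroup ι) :=
    fun a => {g : FreeGroup ι | ∃ b : Bool, (FreeGroup.toWord g).head? = some (a, b)} with hP
  refine ⟨⟨fun a => P a ∪ {g | g = 1 ∧ a = a₀}, ?_, ?_, ?_⟩, fun a => fg_key a⟩
  · intro x y hxy
    simp only [Function.onFun, Set.disjoint_left]
    rintro g (⟨b, hb⟩ | ⟨h1, rfl⟩) (⟨c, hc⟩ | ⟨h1', h2'⟩)
    · rw [hb] at hc
      exact hxy (congrArg (fun o => (o.getD (x, true)).1) hc.symm).symm
    · subst h1'
      simp [FreeGroup.toWord_one] at hb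
    · subst h1
      simp [FreeGroup.toWord_one] at hc
    · exact hxy (h2'.symm ▸ rfl)
  · ext g
    simp only [Set.mem_iUnion, Set.mem_univ, iff_true]
    by_cases hg : g = 1
    · exact ⟨a₀, Or.inr ⟨hg, rfl⟩⟩
    · have : g.toWord ≠ [] := fun h => hg (FreeGroup.toWord_eq_nil_iff.mp h)
      obtain ⟨hd, tl, hw⟩ := List.exists_cons_of_ne_nil this
      exact ⟨hd.1, Or.inl ⟨hd.2, by rw [hw]; simp⟩⟩
  · intro a
    refine ⟨{1, FreeGroup.of a}, ?_, ?_⟩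
    · calc #({1, FreeGroup.of a} : Set (FreeGroup ι)) ≤ 2 := by
            simpa using (Cardinal.mk_insert_le (s := ({FreeGroup.of a} : Set (FreeGroup ι)))
              (a := 1))
        _ < 3 := by norm_num
    · apply Set.eq_univ_of_univ_subset
      rw [← fg_key a]
      exact Set.mul_subset_mul_left Set.subset_union_left
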